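/- A lottery p is ex-ante efficient if and only if there exists a utilitarian representation (u_i)_{i∈N} of the agents' preferences such that p is supported on outcomes of maximal welfare; that is, every x with p(x) > 0 satisfies ∑_{i∈N} u_i(x) = max_{y∈X} ∑_{i∈N} u_i(y). -/

import Mathlib

attribute [local instance] Classical.propDecidable

/-- The strict part of a preference relation. -/
def strictPref {X : Type*} (r : X → X → Prop) (x y : X) : Prop := r x y ∧ ¬ r y x

/-- A preference: a complete (total) and transitive binary relation. -/
def IsPrefOrder {X : Type*} (r : X → X → Prop) : Prop :=
  (∀ x y, r x y ∨ r y x) ∧ Transitive r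

/-- A lottery over the finite set of outcomes `X`. -/
def IsLottery {X : Type*} [Fintype X] (p : X → ℝ) : Prop :=
  (∀ x, 0 ≤ p x) ∧ ∑ x, p x = 1

/-- Total weight a lottery `p` places on outcomes strictly preferred to `x`. -/
noncomputable def upWeight {X : Type*} [Fintype X] (r : X → X → Prop) (p : X → ℝ) (x : X) : ℝ :=
  ∑ y ∈ Finset.univ.filter (fun y => strictPref r y x), p y

/-- First-order stochastic dominance (weak): `p ≿ q`. -/
def SDge {X : Type*} [Fintype X] (r : X → X → Prop) (p q : X → ℝ) : Prop :=
  ∀ x, upWeight r q x ≤ upWeight r p x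

/-- First-order stochastic dominance (strict): `p ≻ q`. -/
def SDgt {X : Type*} [Fintype X] (r : X → X → Prop) (p q : X → ℝ) : Prop :=
  SDge r p q ∧ ∃ x, upWeight r q x < upWeight r p x

/-- A lottery `p` is ex-ante efficient if no lottery weakly SD-dominates it for all agents
and strictly for some agent. -/
def ExAnteEff {X N : Type*} [Fintype X] (pref : N → X → X → Prop) (p : X → ℝ) : Prop :=
  ¬ ∃ q : X → ℝ, IsLottery q ∧ (∀ i, SDge (pref i) q p) ∧ ∃ j, SDgt (pref j) q p

/-- An outcome is Pareto optimal if no outcome is weakly better for all agents and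
strictly better for some agent. -/
def ParetoOptimal {X N : Type*} (pref : N → X → X → Prop) (x : X) : Prop :=
  ¬ ∃ y, (∀ i, pref i y x) ∧ ∃ j, strictPref (pref j) y x

/-- A lottery is ex-post efficient if it is supported on Pareto optimal outcomes. -/
def ExPostEff {X N : Type*} [Fintype X] (pref : N → X → X → Prop) (p : X → ℝ) : Prop :=
  ∀ x, 0 < p x → ParetoOptimal pref x

/-- `u` is a utility representation of the preference `r`. -/
def Represents {X : Type*} (u : X → ℝ) (r : X → X → Prop) : Prop :=
  ∀ x y, (u y ≤ u x ↔ r x y)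

private lemma sum_extend {ι X : Type*} [Fintype ι] (g : ι → X → ℝ) (s : Finset ι)
    (l : ι → ℝ) (hl : ∀ j ∉ s, l j = 0) : ∑ j : ι, l j • g j = ∑ j ∈ s, l j • g j := by
  refine (Finset.sum_subset (Finset.subset_univ s) ?_).symm
  intro x _ hx
  rw [hl x hx, zero_smul]

private lemma cone_carath {ι X : Type*} [Fintype ι] (g : ι → X → ℝ) (l : ι → ℝ)
    (hl : ∀ j, 0 ≤ l j) :
    ∃ (s : Finset ι) (l' : ι → ℝ), LinearIndependent ℝ (fun j : s => g j) ∧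
      (∀ j, 0 ≤ l' j) ∧ (∀ j ∉ s, l' j = 0) ∧ ∑ j, l' j • g j = ∑ j, l j • g j := by
  have key : ∀ (n : ℕ) (supp : Finset ι) (l : ι → ℝ), supp.card ≤ n → (∀ j, 0 ≤ l j) →
      (∀ j ∉ supp, l j = 0) →
      ∃ (s : Finset ι) (l' : ι → ℝ), LinearIndependent ℝ (fun j : s => g j) ∧
      (∀ j, 0 ≤ l' j) ∧ (∀ j ∉ s, l' j = 0) ∧ ∑ j, l' j • g j = ∑ j, l j • g j := by
    intro n
    induction n with
    | zero =>
      intro supp l hcard hl hl0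
      have hs : supp = ∅ := Finset.card_eq_zero.mp (Nat.le_zero.mp hcard)
      subst hs
      have : IsEmpty ((∅ : Finset ι) : Type _) := by simp; exact ⟨fun x => x.2⟩
      exact ⟨∅, l, linearIndependent_empty_type, hl, hl0, rfl⟩
    | succ n ih =>
      intro supp l hcard hl hl0
      by_cases hind : LinearIndependent ℝ (fun j : supp => g j)
      · exact ⟨supp, l, hind, hl, hl0, rfl⟩
      · obtain ⟨μ₀, hμ₀sum, j₁, hj₁⟩ := Fintype.not_linearIndependent_iff.mp hind
        -- WLOG some coefficient is positive
        have hexμ : ∃ μ : supp → ℝ, (∑ j : supp, μ j • g j = 0) ∧ ∃ j, 0 < μ j := by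
          by_cases hc : ∃ j : supp, 0 < μ₀ j
          · exact ⟨μ₀, hμ₀sum, hc⟩
          · have hneg : ∑ j : supp, (-μ₀) j • g (j : ι) = 0 := by
              have h' : ∑ j : supp, (-μ₀) j • g (j : ι) = -∑ j : supp, μ₀ j • g (j : ι) := by
                simp [neg_smul]
              rw [h', hμ₀sum, neg_zero]
            refine ⟨-μ₀, hneg, j₁, ?_⟩
            push_neg at hc
            have := hc j₁
            simp only [Pi.neg_apply]
            rcases lt_trichotomy (μ₀ j₁) 0 with h | h | h
            · linarith
            · exact absurd h hj₁
            · linarith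
        obtain ⟨μ, hμsum, jp, hjp⟩ := hexμ
        let ν : ι → ℝ := fun j => if h : j ∈ supp then μ ⟨j, h⟩ else 0
        have hν0 : ∀ j ∉ supp, ν j = 0 := fun j hj => dif_neg hj
        have hνsum : ∑ j : ι, ν j • g j = 0 := by
          rw [sum_extend g supp ν hν0, ← Finset.sum_attach supp (fun j => ν j • g j)]
          have he : ∀ j : supp, ν (j : ι) • g (j : ι) = μ j • g (j : ι) := by
            intro j
            simp only [ν, dif_pos j.2]
          calc ∑ j ∈ supp.attach, ν (j : ι) • g (j : ι)
              = ∑ j : supp, μ j • g (j : ι) := Finset.sum_congr rfl (fun j _ => he j)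
            _ = 0 := hμsum
        have hjppos : 0 < ν (jp : ι) := by
          have : ν (jp : ι) = μ jp := by simp only [ν, dif_pos jp.2]
          rw [this]; exact hjp
        let F : Finset ι := supp.filter (fun j => 0 < ν j)
        have hFne : F.Nonempty := ⟨jp, Finset.mem_filter.mpr ⟨jp.2, hjppos⟩⟩
        let t : ℝ := F.inf' hFne (fun j => l j / ν j)
        have htnn : 0 ≤ t := by
          apply Finset.le_inf'
          intro b hb
          exact div_nonneg (hl b) (le_of_lt (Finset.mem_filter.mp hb).2)
        obtain ⟨j₀, hj₀F, hj₀eq⟩ := Finset.exists_mem_eq_inf' hFne (fun j => l j / ν j)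
        have hj₀pos : 0 < ν j₀ := (Finset.mem_filter.mp hj₀F).2
        have hj₀supp : j₀ ∈ supp := (Finset.mem_filter.mp hj₀F).1
        let l' : ι → ℝ := fun j => l j - t * ν j
        have hl'nn : ∀ j, 0 ≤ l' j := by
          intro j
          by_cases hj : 0 < ν j
          · have hjF : j ∈ F := by
              refine Finset.mem_filter.mpr ⟨?_, hj⟩
              by_contra hns
              rw [hν0 j hns] at hj; exact lt_irrefl 0 hj
            have h1 : t ≤ l j / ν j := Finset.inf'_le _ hjF
            have h2 := (le_div_iff₀ hj).mp h1
            show 0 ≤ l j - t * ν j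
            linarith
          · push_neg at hj
            have h1 : t * ν j ≤ 0 := mul_nonpos_of_nonneg_of_nonpos htnn hj
            have h2 := hl j
            show 0 ≤ l j - t * ν j
            linarith
        have hl'0 : ∀ j ∉ supp.erase j₀, l' j = 0 := by
          intro j hj
          by_cases hjs : j ∈ supp
          · have hjj₀ : j = j₀ := by
              by_contra hne
              exact hj (Finset.mem_erase.mpr ⟨hne, hjs⟩)
            subst hjj₀
            show l j - t * ν j = 0
            have : t = l j / ν j := hj₀eq
            rw [this, div_mul_cancel₀ _ (ne_of_gt hj₀pos), sub_self]
          · show l j - t * ν j = 0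
            rw [hl0 j hjs, hν0 j hjs, mul_zero, sub_zero]
        have hl'sum : ∑ j, l' j • g j = ∑ j, l j • g j := by
          have he : ∀ j, l' j • g j = l j • g j - t • (ν j • g j) := by
            intro j
            show (l j - t * ν j) • g j = _
            rw [sub_smul, mul_smul]
          rw [Finset.sum_congr rfl (fun j _ => he j), Finset.sum_sub_distrib,
            ← Finset.smul_sum, hνsum, smul_zero, sub_zero]
        have hcard' : (supp.erase j₀).card ≤ n := by
          have := Finset.card_erase_of_mem hj₀supp
          omega
        obtain ⟨s, l'', h1, h2, h3, h4⟩ := ih (supp.erase j₀) l' hcard' hl'nn hl'0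
        exact ⟨s, l'', h1, h2, h3, h4.trans hl'sum⟩
  exact key (Finset.univ.card) Finset.univ l (Finset.card_le_card (Finset.subset_univ _)) hl
    (fun j hj => absurd (Finset.mem_univ j) hj)

private lemma sum_extend' {ι X : Type*} [Fintype ι] (g : ι → X → ℝ) (s : Finset ι)
    (l : ι → ℝ) (hl : ∀ j ∉ s, l j = 0) : ∑ j : ι, l j • g j = ∑ j : s, l j • g j := by
  rw [show (∑ j : s, l (j : ι) • g (j : ι)) = ∑ j ∈ s, l j • g j from
    Finset.sum_attach s (fun j => l j • g j)]
  refine (Finset.sum_subset (Finset.subset_univ s) ?_).symm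
  intro x _ hx
  rw [hl x hx, zero_smul]

private lemma cone_closed {ι X : Type*} [Fintype ι] [Fintype X] (g : ι → X → ℝ)
    (hcar : ∀ l : ι → ℝ, (∀ j, 0 ≤ l j) →
      ∃ (s : Finset ι) (l' : ι → ℝ), LinearIndependent ℝ (fun j : s => g j) ∧
      (∀ j, 0 ≤ l' j) ∧ (∀ j ∉ s, l' j = 0) ∧ ∑ j, l' j • g j = ∑ j, l j • g j) :
    IsClosed {v : X → ℝ | ∃ l : ι → ℝ, (∀ j, 0 ≤ l j) ∧ v = ∑ j, l j • g j} := by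
  classical
  -- linear map from coefficients on s
  let T : (s : Finset ι) → (↥s → ℝ) →ₗ[ℝ] (X → ℝ) := fun s =>
    { toFun := fun m => ∑ j : s, m j • g j
      map_add' := by
        intro a b
        simp [add_smul, Finset.sum_add_distrib]
      map_smul' := by
        intro c a
        simp [mul_smul, Finset.smul_sum] }
  have hset : {v : X → ℝ | ∃ l : ι → ℝ, (∀ j, 0 ≤ l j) ∧ v = ∑ j, l j • g j} =
      ⋃ (s : Finset ι) (_ : LinearIndependent ℝ (fun j : s => g j)),
        (T s) '' {m | ∀ j, 0 ≤ m j} := by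
    ext v
    constructor
    · rintro ⟨l, hl, rfl⟩
      obtain ⟨s, l', hind, hnn, h0, hsum⟩ := hcar l hl
      refine Set.mem_iUnion.mpr ⟨s, Set.mem_iUnion.mpr ⟨hind, ?_⟩⟩
      refine ⟨fun j => l' j, fun j => hnn j, ?_⟩
      show ∑ j : s, l' (j : ι) • g (j : ι) = _
      rw [← sum_extend' g s l' h0, hsum]
    · intro hv
      obtain ⟨s, hs⟩ := Set.mem_iUnion.mp hv
      obtain ⟨hind, m, hm, rfl⟩ := Set.mem_iUnion.mp hs
      refine ⟨fun j => if h : j ∈ s then m ⟨j, h⟩ else 0, ?_, ?_⟩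
      · intro j
        show 0 ≤ if h : j ∈ s then m ⟨j, h⟩ else 0
        by_cases h : j ∈ s
        · rw [dif_pos h]; exact hm ⟨j, h⟩
        · rw [dif_neg h]
      · show (∑ j : s, m j • g j) = _
        rw [sum_extend' g s _ (fun j hj => dif_neg hj)]
        refine Finset.sum_congr rfl ?_
        intro j _
        rw [dif_pos j.2]
  rw [hset]
  refine isClosed_iUnion_of_finite ?_
  intro s
  rw [Set.iUnion_eq_if]
  split
  · next hind =>
    have hker : LinearMap.ker (T s) = ⊥ := by
      rw [LinearMap.ker_eq_bot']
      intro m hm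
      exact funext (Fintype.linearIndependent_iff.mp hind m hm)
    have hemb := LinearMap.isClosedEmbedding_of_injective (f := T s) hker
    have horth : IsClosed {m : ↥s → ℝ | ∀ j, 0 ≤ m j} := by
      have : {m : ↥s → ℝ | ∀ j, 0 ≤ m j} = ⋂ j, {m | 0 ≤ m j} := by
        ext m; simp [Set.mem_iInter]
      rw [this]
      exact isClosed_iInter fun j => isClosed_le continuous_const (continuous_apply j)
    exact hemb.isClosedMap _ horth
  · exact isClosed_empty

private lemma farkas' {ι X : Type*} [Fintype ι] [Fintype X]
    (g : ι → X → ℝ) (f : X → ℝ)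
    (hclosed : IsClosed {v : X → ℝ | ∃ l : ι → ℝ, (∀ j, 0 ≤ l j) ∧ v = ∑ j, l j • g j})
    (h : ∀ d : X → ℝ, (∀ j, 0 ≤ ∑ x, g j x * d x) → 0 ≤ ∑ x, f x * d x) :
    ∃ l : ι → ℝ, (∀ j, 0 ≤ l j) ∧ f = ∑ j, l j • g j := by
  set K : Set (X → ℝ) := {v | ∃ l : ι → ℝ, (∀ j, 0 ≤ l j) ∧ v = ∑ j, l j • g j} with hK
  by_contra hf
  have hfK : f ∉ K := hf
  have hconv : Convex ℝ K := by
    rintro v₁ ⟨l₁, hl₁, rfl⟩ v₂ ⟨l₂, hl₂, rfl⟩ a b ha hb hab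
    refine ⟨fun j => a * l₁ j + b * l₂ j,
      fun j => add_nonneg (mul_nonneg ha (hl₁ j)) (mul_nonneg hb (hl₂ j)), ?_⟩
    rw [Finset.smul_sum, Finset.smul_sum, ← Finset.sum_add_distrib]
    refine Finset.sum_congr rfl fun j _ => ?_
    rw [add_smul, mul_smul, mul_smul]
  obtain ⟨φ, c, hc1, hc2⟩ := geometric_hahn_banach_closed_point hconv hclosed hfK
  have h0K : (0 : X → ℝ) ∈ K := ⟨0, fun j => le_refl 0, by simp⟩
  have hc0 : 0 < c := by have := hc1 0 h0K; simpa using this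
  have hKle : ∀ v ∈ K, φ v ≤ 0 := by
    intro v hv
    by_contra hpos
    push_neg at hpos
    obtain ⟨l, hl, rfl⟩ := hv
    have hmem : ((c + 1) / φ (∑ j, l j • g j)) • (∑ j, l j • g j) ∈ K := by
      refine ⟨fun j => ((c + 1) / φ (∑ j, l j • g j)) * l j, fun j =>
        mul_nonneg (div_nonneg (by linarith) (le_of_lt hpos)) (hl j), ?_⟩
      rw [Finset.smul_sum]
      exact Finset.sum_congr rfl fun j _ => by simp [mul_smul]
    have := hc1 _ hmem
    rw [map_smul, smul_eq_mul, div_mul_cancel₀ _ (ne_of_gt hpos)] at this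
    linarith
  have hgK : ∀ j, g j ∈ K := by
    intro j
    refine ⟨fun j' => if j' = j then 1 else 0, fun j' => by positivity, ?_⟩
    simp [ite_smul]
  -- the separating functional evaluated via coordinates
  set d : X → ℝ := fun x => -φ (fun j => if x = j then 1 else 0) with hd
  have hphi : ∀ v : X → ℝ, ∑ x, v x * d x = -φ v := by
    intro v
    have hv : φ v = ∑ x, v x * φ (fun j => if x = j then (1:ℝ) else 0) := by
      conv_lhs => rw [pi_eq_sum_univ v]
      rw [map_sum]
      exact Finset.sum_congr rfl fun x _ => by rw [map_smul, smul_eq_mul]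
    rw [hv, ← Finset.sum_neg_distrib]
    refine Finset.sum_congr rfl fun x _ => ?_
    simp [hd, mul_neg]
  have hdg : ∀ j, 0 ≤ ∑ x, g j x * d x := by
    intro j
    rw [hphi]
    have := hKle _ (hgK j)
    linarith
  have := h d hdg
  rw [hphi] at this
  linarith

set_option maxHeartbeats 1000000 in
private lemma exists_decomp {X : Type*} [Fintype X] [Nonempty X] (u : X → ℝ) :
    ∃ (a : ℝ) (c : X → ℝ), (∀ z, 0 ≤ c z) ∧ (∀ z, (∃ w, u z < u w) → 0 < c z) ∧
      ∀ y, u y = a + ∑ z, c z * (if u z < u y then 1 else 0) := by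
  classical
  set V : Finset ℝ := Finset.image u Finset.univ with hV
  have hVne : V.Nonempty := ⟨u (Classical.arbitrary X), Finset.mem_image_of_mem u (Finset.mem_univ _)⟩
  set k : ℕ := V.card with hk
  have hkpos : 0 < k := Finset.card_pos.mpr hVne
  set e : Fin k ≃o V := V.orderIsoOfFin rfl with he
  have hmem : ∀ x, u x ∈ V := fun x => Finset.mem_image_of_mem u (Finset.mem_univ _)
  set idx : X → ℕ := fun x => (e.symm ⟨u x, hmem x⟩ : Fin k).1 with hidx
  have hidxlt : ∀ x, idx x < k := fun x => (e.symm ⟨u x, hmem x⟩).2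
  set m : ℕ → ℝ := fun n => (e ⟨min n (k-1), by omega⟩ : ℝ) with hm
  have hm_mono : Monotone m := by
    intro a b hab
    have : (⟨min a (k-1), by omega⟩ : Fin k) ≤ ⟨min b (k-1), by omega⟩ := by
      simp [Fin.le_def]
      omega
    exact_mod_cast Subtype.coe_le_coe.mpr (e.monotone this)
  have hm_idx : ∀ x, m (idx x) = u x := by
    intro x
    have h1 : min (idx x) (k-1) = idx x := by have := hidxlt x; omega
    have : (⟨min (idx x) (k-1), by omega⟩ : Fin k) = e.symm ⟨u x, hmem x⟩ := by
      apply Fin.ext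
      simp [h1, hidx]
      have := (e.symm ⟨u x, hmem x⟩).2; omega
    rw [hm]
    simp only [this, OrderIso.apply_symm_apply]
  have hidx_lt_iff : ∀ x y, u x < u y ↔ idx x < idx y := by
    intro x y
    constructor
    · intro hxy
      have : (⟨u x, hmem x⟩ : V) < ⟨u y, hmem y⟩ := Subtype.mk_lt_mk.mpr hxy
      exact (e.symm.lt_iff_lt.mpr this : e.symm _ < e.symm _)
    · intro hxy
      have : e.symm ⟨u x, hmem x⟩ < e.symm ⟨u y, hmem y⟩ := hxy
      exact Subtype.mk_lt_mk.mp (e.symm.lt_iff_lt.mp this)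
  -- fibers
  set cnt : ℕ → ℕ := fun n => (Finset.univ.filter (fun z => idx z = n)).card with hcnt
  have hfib_ne : ∀ n < k, 0 < cnt n := by
    intro n hn
    have hmem' : ((e ⟨n, hn⟩ : V) : ℝ) ∈ Finset.image u Finset.univ := (e ⟨n, hn⟩).2
    obtain ⟨x, _, hx⟩ := Finset.mem_image.mp hmem'
    have hix : idx x = n := by
      have : e.symm ⟨u x, hmem x⟩ = ⟨n, hn⟩ := by
        rw [show (⟨u x, hmem x⟩ : V) = e ⟨n, hn⟩ from Subtype.ext hx]
        exact e.symm_apply_apply _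
      show (e.symm ⟨u x, hmem x⟩ : Fin k).1 = n
      rw [this]
    rw [hcnt]
    exact Finset.card_pos.mpr ⟨x, Finset.mem_filter.mpr ⟨Finset.mem_univ x, hix⟩⟩
  set c : X → ℝ := fun z => (m (idx z + 1) - m (idx z)) / (cnt (idx z)) with hc
  have hcnn : ∀ z, 0 ≤ c z := by
    intro z
    apply div_nonneg _ (Nat.cast_nonneg _)
    have := hm_mono (Nat.le_succ (idx z))
    linarith
  have hcpos : ∀ z, (∃ w, u z < u w) → 0 < c z := by
    intro z ⟨w, hw⟩
    have hlt : idx z < idx w := (hidx_lt_iff z w).mp hw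
    have hwk := hidxlt w
    have h1 : min (idx z) (k-1) = idx z := by have := hidxlt z; omega
    have h2 : min (idx z + 1) (k-1) = idx z + 1 := by omega
    have hmm : m (idx z) < m (idx z + 1) := by
      rw [hm]
      have : (⟨min (idx z) (k-1), by omega⟩ : Fin k) < ⟨min (idx z + 1) (k-1), by omega⟩ := by
        simp [Fin.lt_def]; omega
      exact_mod_cast Subtype.coe_lt_coe.mpr (e.strictMono this)
    have hcntpos : 0 < cnt (idx z) := hfib_ne _ (hidxlt z)
    apply div_pos (by linarith) (by exact_mod_cast hcntpos)
  refine ⟨m 0, c, hcnn, hcpos, ?_⟩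
  intro y
  have hident : ∑ z, c z * (if u z < u y then 1 else 0) = m (idx y) - m 0 := by
    have hstep1 : ∑ z, c z * (if u z < u y then 1 else 0)
        = ∑ z ∈ Finset.univ.filter (fun z => idx z < idx y), c z := by
      rw [Finset.sum_filter]
      refine Finset.sum_congr rfl fun z _ => ?_
      by_cases h : u z < u y
      · rw [if_pos h, if_pos ((hidx_lt_iff z y).mp h), mul_one]
      · rw [if_neg h, if_neg (fun hc' => h ((hidx_lt_iff z y).mpr hc')), mul_zero]
    rw [hstep1]
    have hmaps : ∀ z ∈ Finset.univ.filter (fun z => idx z < idx y), idx z ∈ Finset.range (idx y) :=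
      fun z hz => Finset.mem_range.mpr (Finset.mem_filter.mp hz).2
    rw [← Finset.sum_fiberwise_of_maps_to hmaps c]
    have hinner : ∀ j ∈ Finset.range (idx y),
        ∑ z ∈ (Finset.univ.filter (fun z => idx z < idx y)).filter (fun z => idx z = j), c z
          = m (j+1) - m j := by
      intro j hj
      have hjlt : j < idx y := Finset.mem_range.mp hj
      have hfeq : (Finset.univ.filter (fun z => idx z < idx y)).filter (fun z => idx z = j)
          = Finset.univ.filter (fun z => idx z = j) := by
        ext z
        simp only [Finset.mem_filter, Finset.mem_univ, true_and]
        constructor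
        · rintro ⟨_, h2⟩; exact h2
        · intro h2; exact ⟨by omega, h2⟩
      rw [hfeq]
      have hval : ∀ z ∈ Finset.univ.filter (fun z => idx z = j), c z = (m (j+1) - m j) / cnt j := by
        intro z hz
        have := (Finset.mem_filter.mp hz).2
        rw [hc]
        simp only [this]
      rw [Finset.sum_congr rfl hval, Finset.sum_const]
      have hcpos' : 0 < cnt j := hfib_ne j (by have := hidxlt y; omega)
      rw [show ((Finset.univ.filter (fun z => idx z = j)).card) = cnt j from rfl]
      rw [nsmul_eq_mul, mul_comm, div_mul_cancel₀]
      exact Nat.cast_ne_zero.mpr hcpos'.ne'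
    rw [Finset.sum_congr rfl hinner, Finset.sum_range_sub m (idx y)]
  rw [hident, hm_idx y]
  ring

private lemma strictPref_iff {X : Type*} {r : X → X → Prop} {u : X → ℝ}
    (hu : Represents u r) (x z : X) : strictPref r x z ↔ u z < u x := by
  rw [lt_iff_le_not_ge]
  constructor
  · rintro ⟨h1, h2⟩
    exact ⟨(hu x z).mpr h1, fun hc => h2 ((hu z x).mp hc)⟩
  · rintro ⟨h1, h2⟩
    exact ⟨(hu x z).mp h1, fun hc => h2 ((hu z x).mpr hc)⟩

private lemma upWeight_eq_sum {X : Type*} [Fintype X] (r : X → X → Prop) (d : X → ℝ) (z : X) :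
    upWeight r d z = ∑ x, (if strictPref r x z then 1 else 0) * d x := by
  rw [upWeight, Finset.sum_filter]
  exact Finset.sum_congr rfl fun x _ => by by_cases h : strictPref r x z <;> simp [h]

private lemma upWeight_linear {X : Type*} [Fintype X] (r : X → X → Prop) (p d : X → ℝ) (ε : ℝ)
    (z : X) : upWeight r (fun y => p y + ε * d y) z = upWeight r p z + ε * upWeight r d z := by
  simp [upWeight, Finset.sum_add_distrib, Finset.mul_sum]

private lemma upWeight_sub {X : Type*} [Fintype X] (r : X → X → Prop) (q p : X → ℝ)
    (z : X) : upWeight r (fun y => q y - p y) z = upWeight r q z - upWeight r p z := by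
  simp [upWeight, Finset.sum_sub_distrib]

private lemma exp_util {X : Type*} [Fintype X] [Nonempty X] {r : X → X → Prop} {u : X → ℝ}
    (hu : Represents u r) (d : X → ℝ) (hd : ∑ x, d x = 0)
    (hup : ∀ z, 0 ≤ upWeight r d z) :
    0 ≤ ∑ x, u x * d x ∧ ((∃ z, 0 < upWeight r d z) → 0 < ∑ x, u x * d x) := by
  obtain ⟨a, c, hcnn, hcpos, hdec⟩ := exists_decomp u
  have hkey : ∑ x, u x * d x = ∑ z, c z * upWeight r d z := by
    calc ∑ x, u x * d x
        = ∑ x, (a + ∑ z, c z * (if u z < u x then 1 else 0)) * d x :=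
          Finset.sum_congr rfl fun x _ => by rw [← hdec x]
      _ = a * ∑ x, d x + ∑ x, (∑ z, c z * (if u z < u x then 1 else 0)) * d x := by
          rw [Finset.mul_sum, ← Finset.sum_add_distrib]
          exact Finset.sum_congr rfl fun x _ => by ring
      _ = ∑ x, ∑ z, c z * (if u z < u x then 1 else 0) * d x := by
          rw [hd, mul_zero, zero_add]
          exact Finset.sum_congr rfl fun x _ => by rw [Finset.sum_mul]
      _ = ∑ z, ∑ x, c z * (if u z < u x then 1 else 0) * d x := Finset.sum_comm
      _ = ∑ z, c z * upWeight r d z := by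
          refine Finset.sum_congr rfl fun z _ => ?_
          rw [upWeight_eq_sum, Finset.mul_sum]
          refine Finset.sum_congr rfl fun x _ => ?_
          rw [mul_assoc]
          congr 2
          exact if_congr ((strictPref_iff hu x z).symm) rfl rfl
  rw [hkey]
  constructor
  · exact Finset.sum_nonneg fun z _ => mul_nonneg (hcnn z) (hup z)
  · rintro ⟨z₀, hz₀⟩
    have hz₀ne : ∃ w, strictPref r w z₀ := by
      by_contra hno
      push_neg at hno
      have : upWeight r d z₀ = 0 := by
        rw [upWeight]
        rw [Finset.filter_false_of_mem (fun w _ => hno w), Finset.sum_empty]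
      rw [this] at hz₀; exact lt_irrefl 0 hz₀
    obtain ⟨w, hw⟩ := hz₀ne
    have hcz₀ : 0 < c z₀ := hcpos z₀ ⟨w, (strictPref_iff hu w z₀).mp hw⟩
    refine Finset.sum_pos' (fun z _ => mul_nonneg (hcnn z) (hup z)) ⟨z₀, Finset.mem_univ z₀, ?_⟩
    exact mul_pos hcz₀ hz₀

private lemma repr_of_coeffs {X : Type*} [Fintype X] {r : X → X → Prop} (hr : IsPrefOrder r)
    (c : X → ℝ) (hc : ∀ z, 0 < c z) :
    Represents (fun y => ∑ x, c x * (if strictPref r y x then 1 else 0)) r := by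
  obtain ⟨htot, htrans⟩ := hr
  have hmono : ∀ x y, r x y → ∀ z, (if strictPref r y z then (1:ℝ) else 0) ≤
      (if strictPref r x z then 1 else 0) := by
    intro x y hxy z
    by_cases h : strictPref r y z
    · have hxz : strictPref r x z := by
        obtain ⟨h1, h2⟩ := h
        refine ⟨htrans hxy h1, fun hzx => h2 (htrans hzx hxy)⟩
      rw [if_pos h, if_pos hxz]
    · by_cases h' : strictPref r x z
      · simp [h, h']
      · simp [h, h']
  intro x y
  constructor
  · intro hle
    by_contra hxy
    have hyx : r y x := (htot x y).resolve_left hxy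
    have hstrict : strictPref r y x := ⟨hyx, hxy⟩
    -- show u x < u y
    have hlt : ∑ z, c z * (if strictPref r x z then (1:ℝ) else 0)
        < ∑ z, c z * (if strictPref r y z then 1 else 0) := by
      refine Finset.sum_lt_sum (fun z _ => ?_) ⟨x, Finset.mem_univ x, ?_⟩
      · exact mul_le_mul_of_nonneg_left (hmono y x hyx z) (le_of_lt (hc z))
      · have h1 : ¬ strictPref r x x := fun ⟨_, h2⟩ => h2 (htot x x |>.elim id id)
        rw [if_pos hstrict, if_neg h1, mul_one, mul_zero]
        exact hc x
    simp only at hle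
    linarith
  · intro hxy
    refine Finset.sum_le_sum fun z _ => ?_
    exact mul_le_mul_of_nonneg_left (hmono x y hxy z) (le_of_lt (hc z))

theorem stmt_0 {X N : Type*} [Fintype X] [Nonempty X] [Fintype N] [Nonempty N]
    (pref : N → X → X → Prop) (hpref : ∀ i, IsPrefOrder (pref i))
    (p : X → ℝ) (hp : IsLottery p) :
    ExAnteEff pref p ↔
      ∃ u : N → X → ℝ, (∀ i, Represents (u i) (pref i)) ∧
        ∀ x, 0 < p x → ∀ y, ∑ i, u i y ≤ ∑ i, u i x := by
  constructor
  · -- forward: efficiency implies utilitarian representation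
    intro hEff
    classical
    set ι := ((N × X) ⊕ (X ⊕ (Unit ⊕ Unit))) with hι
    let g : ι → X → ℝ := fun j y =>
      match j with
      | .inl (i, x) => if strictPref (pref i) y x then 1 else 0
      | .inr (.inl x) => if p x = 0 then (if y = x then 1 else 0) else 0
      | .inr (.inr (.inl _)) => 1
      | .inr (.inr (.inr _)) => -1
    let f : X → ℝ := fun y => -∑ i : N, ∑ x : X, (if strictPref (pref i) y x then (1:ℝ) else 0)
    have hfar : ∀ d : X → ℝ, (∀ j, 0 ≤ ∑ x, g j x * d x) → 0 ≤ ∑ x, f x * d x := by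
      intro d hdg
      have hsum0 : ∑ x, d x = 0 := by
        have h1 := hdg (.inr (.inr (.inl ())))
        have h2 := hdg (.inr (.inr (.inr ())))
        simp only [g, one_mul, neg_one_mul, Finset.sum_neg_distrib] at h1 h2
        linarith
      have hzero : ∀ x, p x = 0 → 0 ≤ d x := by
        intro x hpx
        have h1 := hdg (.inr (.inl x))
        simp only [g, hpx, if_true, ite_mul, one_mul, zero_mul] at h1
        rwa [Finset.sum_ite_eq' Finset.univ x d, if_pos (Finset.mem_univ x)] at h1
      have hupnn : ∀ i x, 0 ≤ upWeight (pref i) d x := by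
        intro i x
        rw [upWeight_eq_sum]
        exact hdg (.inl (i, x))
      have hfval : ∑ x, f x * d x = -∑ i : N, ∑ z : X, upWeight (pref i) d z := by
        have : ∀ y, f y * d y = -∑ i : N, ∑ z : X,
            (if strictPref (pref i) y z then (1:ℝ) else 0) * d y := by
          intro y
          simp only [f, neg_mul, Finset.sum_mul]
        calc ∑ y, f y * d y
            = -∑ y : X, ∑ i : N, ∑ z : X,
                (if strictPref (pref i) y z then (1:ℝ) else 0) * d y := by
              rw [← Finset.sum_neg_distrib]
              exact Finset.sum_congr rfl fun y _ => this y
          _ = -∑ i : N, ∑ y : X, ∑ z : X,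
                (if strictPref (pref i) y z then (1:ℝ) else 0) * d y := by
              rw [Finset.sum_comm]
          _ = -∑ i : N, ∑ z : X, ∑ y : X,
                (if strictPref (pref i) y z then (1:ℝ) else 0) * d y := by
              congr 1
              exact Finset.sum_congr rfl fun i _ => Finset.sum_comm
          _ = -∑ i : N, ∑ z : X, upWeight (pref i) d z := by
              congr 1
              exact Finset.sum_congr rfl fun i _ => Finset.sum_congr rfl fun z _ =>
                (upWeight_eq_sum (pref i) d z).symm
      rw [hfval]
      rw [neg_nonneg]
      by_contra hneg
      push_neg at hneg
      have hex : ∃ i z, 0 < upWeight (pref i) d z := by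
        by_contra hall
        push_neg at hall
        have : ∑ i : N, ∑ z : X, upWeight (pref i) d z ≤ 0 :=
          Finset.sum_nonpos fun i _ => Finset.sum_nonpos fun z _ => hall i z
        linarith
      obtain ⟨i₀, z₀, hi₀⟩ := hex
      -- construct a dominating lottery
      set Bset : Finset X := Finset.univ.filter (fun x => d x < 0) with hBset
      have hppos : ∀ x ∈ Bset, 0 < p x := by
        intro x hx
        have hdx : d x < 0 := (Finset.mem_filter.mp hx).2
        rcases lt_or_eq_of_le (hp.1 x) with h | h
        · exact h
        · exact absurd (hzero x h.symm) (not_le.mpr hdx)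
      by_cases hBne : Bset.Nonempty
      · set ε : ℝ := Bset.inf' hBne (fun x => p x / (-d x)) with hε
        have hεpos : 0 < ε := by
          rw [Finset.lt_inf'_iff]
          intro b hb
          have hdb : d b < 0 := (Finset.mem_filter.mp hb).2
          exact div_pos (hppos b hb) (by linarith)
        have hqnn : ∀ x, 0 ≤ p x + ε * d x := by
          intro x
          by_cases hdx : d x < 0
          · have hmem : x ∈ Bset := Finset.mem_filter.mpr ⟨Finset.mem_univ x, hdx⟩
            have hle : ε ≤ p x / (-d x) := Finset.inf'_le _ hmem
            have := (le_div_iff₀ (by linarith : (0:ℝ) < -d x)).mp hle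
            nlinarith
          · push_neg at hdx
            have := hp.1 x
            nlinarith
        refine absurd ?_ hEff
        refine ⟨fun y => p y + ε * d y, ⟨hqnn, ?_⟩, ?_, i₀, ?_, z₀, ?_⟩
        · rw [Finset.sum_add_distrib, hp.2, ← Finset.mul_sum, hsum0, mul_zero, add_zero]
        · intro i x
          rw [upWeight_linear]
          nlinarith [hupnn i x]
        · intro x
          rw [upWeight_linear]
          nlinarith [hupnn i₀ x]
        · rw [upWeight_linear]
          nlinarith
      · -- no negative coordinates: use ε = 1
        have hqnn : ∀ x, 0 ≤ p x + 1 * d x := by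
          intro x
          have hdx : 0 ≤ d x := by
            by_contra hc
            exact hBne ⟨x, Finset.mem_filter.mpr ⟨Finset.mem_univ x, not_le.mp hc⟩⟩
          have := hp.1 x
          linarith
        refine absurd ?_ hEff
        refine ⟨fun y => p y + 1 * d y, ⟨hqnn, ?_⟩, ?_, i₀, ?_, z₀, ?_⟩
        · rw [Finset.sum_add_distrib, hp.2, ← Finset.mul_sum, hsum0, mul_zero, add_zero]
        · intro i x
          rw [upWeight_linear]
          nlinarith [hupnn i x]
        · intro x
          rw [upWeight_linear]
          nlinarith [hupnn i₀ x]
        · rw [upWeight_linear]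
          nlinarith
    obtain ⟨l, hlnn, hleq⟩ := farkas' g f (cone_closed g (cone_carath g)) hfar
    -- build the utilities
    refine ⟨fun i y => ∑ x, (1 + l (.inl (i, x))) * (if strictPref (pref i) y x then 1 else 0),
      fun i => repr_of_coeffs (hpref i) _ (fun x => by have := hlnn (.inl (i, x)); linarith), ?_⟩
    have hfy : ∀ y, f y = ∑ j, l j * g j y := by
      intro y
      rw [hleq]
      rw [Finset.sum_apply]
      exact Finset.sum_congr rfl fun j _ => rfl
    set A : X → ℝ := fun y => ∑ i : N, ∑ x : X,
      l (.inl (i, x)) * (if strictPref (pref i) y x then 1 else 0) with hA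
    set B : X → ℝ := fun y => ∑ x : X,
      l (.inr (.inl x)) * (if p x = 0 then (if y = x then (1:ℝ) else 0) else 0) with hB
    set C : ℝ := l (.inr (.inr (.inl ()))) - l (.inr (.inr (.inr ()))) with hC
    have hsplit : ∀ y, f y = A y + (B y + C) := by
      intro y
      rw [hfy y, Fintype.sum_sum_type, Fintype.sum_sum_type, Fintype.sum_prod_type,
        Fintype.sum_sum_type]
      have e1 : ∑ i : N, ∑ x : X, l (.inl (i, x)) * g (.inl (i, x)) y = A y :=
        Finset.sum_congr rfl fun i _ => Finset.sum_congr rfl fun x _ => rfl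
      have e2 : ∑ x : X, l (.inr (.inl x)) * g (.inr (.inl x)) y = B y :=
        Finset.sum_congr rfl fun x _ => rfl
      have e3 : (∑ a : Unit, l (.inr (.inr (.inl a))) * g (.inr (.inr (.inl a))) y)
          + (∑ a : Unit, l (.inr (.inr (.inr a))) * g (.inr (.inr (.inr a))) y) = C := by
        rw [Fintype.sum_unique, Fintype.sum_unique]
        show l (.inr (.inr (.inl ()))) * 1 + l (.inr (.inr (.inr ()))) * (-1) = C
        rw [hC]
        ring
      rw [e1, e2, e3]
    have hW : ∀ y, (∑ i : N, ∑ x : X,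
        (1 + l (.inl (i, x))) * (if strictPref (pref i) y x then (1:ℝ) else 0)) = -B y - C := by
      intro y
      have h1 : (∑ i : N, ∑ x : X,
          (1 + l (.inl (i, x))) * (if strictPref (pref i) y x then (1:ℝ) else 0)) = -f y + A y := by
        simp only [f, A, neg_neg, ← Finset.sum_add_distrib]
        refine Finset.sum_congr rfl fun i _ => ?_
        exact Finset.sum_congr rfl fun x _ => by ring
      rw [h1, hsplit y]
      ring
    have hBnn : ∀ y, 0 ≤ B y := by
      intro y
      refine Finset.sum_nonneg fun x _ => ?_
      refine mul_nonneg (hlnn _) ?_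
      by_cases h1 : p x = 0 <;> by_cases h2 : y = x <;> simp [h1, h2]
    have hBzero : ∀ y, 0 < p y → B y = 0 := by
      intro y hy
      refine Finset.sum_eq_zero fun x _ => ?_
      by_cases h1 : p x = 0
      · by_cases h2 : y = x
        · subst h2
          rw [h1] at hy
          exact absurd hy (lt_irrefl 0)
        · simp [h1, h2]
      · simp [h1]
    intro x hx y
    rw [hW x, hW y, hBzero x hx]
    have := hBnn y
    linarith
  · -- backward: utilitarian representation implies efficiency
    rintro ⟨u, hrepr, hmax⟩ ⟨q, hq, hge, j, hgt⟩
    classical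
    set d : X → ℝ := fun y => q y - p y with hd
    have hd0 : ∑ x, d x = 0 := by
      simp only [hd, Finset.sum_sub_distrib, hp.2, hq.2, sub_self]
    have hup : ∀ i z, 0 ≤ upWeight (pref i) d z := by
      intro i z
      rw [hd, upWeight_sub]
      have := hge i z
      linarith
    have hterm : ∀ i, 0 ≤ ∑ x, u i x * d x := fun i =>
      (exp_util (hrepr i) d hd0 (hup i)).1
    have htermj : 0 < ∑ x, u j x * d x := by
      obtain ⟨z, hz⟩ := hgt.2
      refine (exp_util (hrepr j) d hd0 (hup j)).2 ⟨z, ?_⟩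
      rw [hd, upWeight_sub]
      linarith
    have hpos : 0 < ∑ i, ∑ x, u i x * d x :=
      Finset.sum_pos' (fun i _ => hterm i) ⟨j, Finset.mem_univ j, htermj⟩
    have hswap : ∑ i, ∑ x, u i x * d x = ∑ x, (∑ i, u i x) * d x := by
      rw [Finset.sum_comm]
      exact Finset.sum_congr rfl fun x _ => (Finset.sum_mul _ _ _).symm
    -- find a point in the support
    have hx₀ : ∃ x₀, 0 < p x₀ := by
      by_contra hc
      push_neg at hc
      have : ∀ x, p x = 0 := fun x => le_antisymm (hc x) (hp.1 x)
      have : ∑ x, p x = 0 := Finset.sum_eq_zero fun x _ => this x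
      rw [hp.2] at this
      linarith
    obtain ⟨x₀, hx₀⟩ := hx₀
    set W : X → ℝ := fun y => ∑ i, u i y with hWdef
    have hWle : ∀ y, W y ≤ W x₀ := hmax x₀ hx₀
    have hWeq : ∀ x, 0 < p x → W x = W x₀ := fun x hx =>
      le_antisymm (hWle x) (hmax x hx x₀)
    have hle : ∑ x, W x * d x ≤ 0 := by
      have h1 : ∑ x, W x * q x ≤ W x₀ := by
        calc ∑ x, W x * q x ≤ ∑ x, W x₀ * q x :=
              Finset.sum_le_sum fun x _ => mul_le_mul_of_nonneg_right (hWle x) (hq.1 x)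
          _ = W x₀ := by rw [← Finset.mul_sum, hq.2, mul_one]
      have h2 : ∑ x, W x * p x = W x₀ := by
        have : ∀ x, W x * p x = W x₀ * p x := by
          intro x
          rcases lt_or_eq_of_le (hp.1 x) with h | h
          · rw [hWeq x h]
          · rw [← h, mul_zero, mul_zero]
        rw [Finset.sum_congr rfl fun x _ => this x, ← Finset.mul_sum, hp.2, mul_one]
      have : ∑ x, W x * d x = ∑ x, W x * q x - ∑ x, W x * p x := by
        rw [← Finset.sum_sub_distrib]
        exact Finset.sum_congr rfl fun x _ => by rw [hd]; ring
      rw [this, h2]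
      linarith
    rw [hswap] at hpos
    have : ∑ x, W x * d x = ∑ x, (∑ i, u i x) * d x := rfl
    linarith
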